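/- For each fixed r > 0, the quantity r·I_ν′(r)/I_ν(r) is strictly increasing as a function of ν ≥ 0: if 0 ≤ ν < μ then r·I_ν′(r)/I_ν(r) < r·I_μ′(r)/I_μ(r). -/

import Mathlib

/-- Modified Bessel function of the first kind. -/
noncomputable def besselI (ν x : ℝ) : ℝ :=
  ∑' k : ℕ, (x / 2) ^ (ν + 2 * (k : ℝ)) / (Nat.factorial k * Real.Gamma (ν + k + 1))

namespace BesselMono

open Real Filter Topology Set

noncomputable def d (ν : ℝ) (k : ℕ) : ℝ := (Nat.factorial k : ℝ) * Real.Gamma (ν + k + 1)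

noncomputable def T (ν : ℝ) (k : ℕ) (x : ℝ) : ℝ := (x / 2) ^ (ν + 2 * (k : ℝ)) / d ν k

lemma besselI_eq (ν x : ℝ) : besselI ν x = ∑' k, T ν k x := rfl

lemma T_def (ν : ℝ) (k : ℕ) (x : ℝ) : T ν k x = (x / 2) ^ (ν + 2 * (k : ℝ)) / d ν k := rfl

lemma rpow_split {y : ℝ} (hy : 0 < y) (c : ℝ) (k : ℕ) :
    y ^ (c + 2 * (k : ℝ)) = y ^ c * (y ^ 2) ^ k := by
  rw [Real.rpow_add hy, show (2:ℝ) * (k:ℝ) = ((2 * k : ℕ) : ℝ) by push_cast; ring,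
    Real.rpow_natCast, pow_mul]

variable {ν x : ℝ}

lemma d_pos (hν : 0 ≤ ν) (k : ℕ) : 0 < d ν k := by
  have h1 : (0:ℝ) < ν + k + 1 := by positivity
  exact mul_pos (by exact_mod_cast (Nat.factorial_pos k)) (Real.Gamma_pos_of_pos h1)

lemma d_succ (hν : 0 ≤ ν) (k : ℕ) :
    d ν (k + 1) = ((k : ℝ) + 1) * (ν + k + 1) * d ν k := by
  have h1 : (ν + (k:ℝ) + 1) ≠ 0 := by positivity
  have h2 : Real.Gamma (ν + (k+1:ℕ) + 1) = (ν + k + 1) * Real.Gamma (ν + k + 1) := by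
    rw [show (ν + ((k:ℕ)+1:ℕ) + 1 : ℝ) = (ν + k + 1) + 1 by push_cast; ring]
    exact Real.Gamma_add_one h1
  simp only [d, Nat.factorial_succ, h2]
  push_cast
  ring

lemma gamma_le (hν : 0 ≤ ν) (k : ℕ) :
    Real.Gamma (ν + 1) * (Nat.factorial k : ℝ) ≤ Real.Gamma (ν + k + 1) := by
  induction k with
  | zero => simp
  | succ n ih =>
    have h1 : (ν + (n:ℝ) + 1) ≠ 0 := by positivity
    have h2 : Real.Gamma (ν + (n+1:ℕ) + 1) = (ν + n + 1) * Real.Gamma (ν + n + 1) := by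
      rw [show (ν + ((n:ℕ)+1:ℕ) + 1 : ℝ) = (ν + n + 1) + 1 by push_cast; ring]
      exact Real.Gamma_add_one h1
    rw [h2, Nat.factorial_succ]
    push_cast
    have hg : 0 < Real.Gamma (ν + 1) := Real.Gamma_pos_of_pos (by positivity)
    calc Real.Gamma (ν + 1) * (((n:ℝ) + 1) * (Nat.factorial n : ℝ))
        = ((n:ℝ)+1) * (Real.Gamma (ν + 1) * (Nat.factorial n : ℝ)) := by ring
      _ ≤ ((n:ℝ)+1) * Real.Gamma (ν + n + 1) := by
          apply mul_le_mul_of_nonneg_left ih (by positivity)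
      _ ≤ (ν + n + 1) * Real.Gamma (ν + n + 1) := by
          apply mul_le_mul_of_nonneg_right (by linarith) (Real.Gamma_pos_of_pos (by positivity)).le

lemma sq_le_pow4 (k : ℕ) : ((k : ℝ) + 1) ^ 2 ≤ 4 * 4 ^ k := by
  have h1 : (k : ℝ) + 1 ≤ 2 * 2 ^ k := by
    have := @Nat.lt_two_pow_self k
    have : (k : ℝ) < 2 ^ k := by exact_mod_cast this
    have h2 : (1:ℝ) ≤ 2 ^ k := one_le_pow₀ (by norm_num)
    linarith
  have h0 : (0:ℝ) ≤ (k:ℝ) + 1 := by positivity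
  have h4 : (4:ℝ)^k = 2^k * 2^k := by rw [show (4:ℝ) = 2*2 by norm_num, mul_pow]
  calc ((k:ℝ)+1)^2 ≤ (2 * 2 ^ k)^2 := by nlinarith
    _ = 4 * (2^k * 2^k) := by ring
    _ = 4 * 4 ^ k := by rw [h4]

lemma summable_master (hν : 0 ≤ ν) {q : ℝ} (hq : 0 ≤ q) {w : ℕ → ℝ} {C : ℝ}
    (hw : ∀ k, |w k| ≤ C * ((k : ℝ) + 1) ^ 2) :
    Summable (fun k => w k * q ^ k / d ν k) := by
  have hg : 0 < Real.Gamma (ν + 1) := Real.Gamma_pos_of_pos (by positivity)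
  have hC : 0 ≤ C := by
    have h := hw 0
    norm_num at h
    linarith [abs_nonneg (w 0)]
  apply Summable.of_norm_bounded (g := fun k => (4 * C / Real.Gamma (ν+1)) * ((4*q) ^ k / (Nat.factorial k : ℝ)))
  · exact (Real.summable_pow_div_factorial (4*q)).mul_left _
  · intro k
    have hd := d_pos hν k
    rw [Real.norm_eq_abs, abs_div, abs_of_pos hd, abs_mul, abs_pow, abs_of_nonneg hq]
    have hnum : |w k| * q ^ k ≤ 4 * C * (4*q)^k := by
      calc |w k| * q ^ k ≤ (C * ((k:ℝ)+1)^2) * q ^ k := by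
            apply mul_le_mul_of_nonneg_right (hw k) (by positivity)
        _ ≤ (C * (4 * 4 ^ k)) * q ^ k := by
            apply mul_le_mul_of_nonneg_right _ (by positivity)
            exact mul_le_mul_of_nonneg_left (sq_le_pow4 k) hC
        _ = 4 * C * (4*q)^k := by rw [mul_pow]; ring
    have h1 : (1:ℝ) ≤ (Nat.factorial k : ℝ) := by exact_mod_cast (Nat.factorial_pos k)
    have h2 : Real.Gamma (ν + 1) ≤ Real.Gamma (ν + k + 1) := by
      nlinarith [gamma_le hν k, mul_le_mul_of_nonneg_left h1 hg.le]
    have hden : (Nat.factorial k : ℝ) * Real.Gamma (ν + 1) ≤ d ν k := by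
      unfold d
      exact mul_le_mul_of_nonneg_left h2 (by positivity)
    have hfac : (0:ℝ) < (Nat.factorial k : ℝ) := by exact_mod_cast Nat.factorial_pos k
    calc |w k| * q ^ k / d ν k
        ≤ (4 * C * (4*q)^k) / ((Nat.factorial k : ℝ) * Real.Gamma (ν+1)) :=
          div_le_div₀ (by positivity) hnum (by positivity) hden
      _ = 4 * C / Real.Gamma (ν+1) * ((4*q) ^ k / (Nat.factorial k : ℝ)) := by
          rw [div_mul_div_comm, mul_comm (Real.Gamma (ν+1))]

lemma summable_wT (hν : 0 ≤ ν) (hx : 0 < x) {w : ℕ → ℝ} {C : ℝ}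
    (hw : ∀ k, |w k| ≤ C * ((k : ℝ) + 1) ^ 2) :
    Summable (fun k => w k * T ν k x) := by
  have hx2 : (0:ℝ) < x / 2 := by linarith
  have hxp : (0:ℝ) ≤ (x/2) ^ ν := Real.rpow_nonneg hx2.le ν
  have := summable_master (q := (x/2)^2) hν (by positivity)
      (w := fun k => w k * (x/2) ^ ν) (C := C * (x/2) ^ ν) (by
    intro k
    rw [abs_mul, abs_of_nonneg hxp]
    calc |w k| * (x/2)^ν ≤ (C * ((k:ℝ)+1)^2) * (x/2)^ν :=
          mul_le_mul_of_nonneg_right (hw k) hxp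
      _ = C * (x/2)^ν * ((k:ℝ)+1)^2 := by ring)
  apply this.congr
  intro k
  rw [T_def, rpow_split hx2]
  ring

lemma T_pos (hν : 0 ≤ ν) (hx : 0 < x) (k : ℕ) : 0 < T ν k x := by
  rw [T_def]
  exact div_pos (Real.rpow_pos_of_pos (by linarith) _) (d_pos hν k)

lemma summable_T (hν : 0 ≤ ν) (hx : 0 < x) : Summable (fun k => T ν k x) := by
  have := summable_wT (hν := hν) (hx := hx) (w := fun _ => (1:ℝ)) (C := 1) (by
    intro k
    rw [abs_one]
    have hk : (0:ℝ) ≤ (k:ℝ) := Nat.cast_nonneg k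
    nlinarith)
  simpa using this

lemma besselI_pos (hν : 0 ≤ ν) (hx : 0 < x) : 0 < besselI ν x := by
  rw [besselI_eq]
  exact Summable.tsum_pos (summable_T hν hx) (fun k => (T_pos hν hx k).le) 0 (T_pos hν hx 0)

lemma rpow_le_max {a y b p : ℝ} (ha : 0 < a) (hay : a ≤ y) (hyb : y ≤ b) :
    y ^ p ≤ max (a ^ p) (b ^ p) := by
  rcases le_or_gt 0 p with hp | hp
  · exact le_max_of_le_right (Real.rpow_le_rpow (by linarith) hyb hp)
  · exact le_max_of_le_left (Real.rpow_le_rpow_of_nonpos ha hay hp.le)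

/-- Derivative term. -/
noncomputable def Dt (ν : ℝ) (k : ℕ) (x : ℝ) : ℝ :=
  2⁻¹ * (ν + 2 * (k : ℝ)) * (x / 2) ^ (ν + 2 * (k : ℝ) - 1) / d ν k

/-- Second derivative term. -/
noncomputable def Et (ν : ℝ) (k : ℕ) (x : ℝ) : ℝ :=
  2⁻¹ * (ν + 2 * (k : ℝ)) * (2⁻¹ * (ν + 2 * (k : ℝ) - 1) *
    (x / 2) ^ (ν + 2 * (k : ℝ) - 1 - 1)) / d ν k

lemma hasDerivAt_T (k : ℕ) (hx : 0 < x) : HasDerivAt (fun y => T ν k y) (Dt ν k x) x := by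
  have h1 : HasDerivAt (fun y : ℝ => y / 2) (1 / 2) x := (hasDerivAt_id x).div_const 2
  have h2 := (h1.rpow_const (p := ν + 2 * (k:ℝ)) (Or.inl (by positivity))).div_const (d ν k)
  refine h2.congr_deriv ?_
  simp only [Dt]
  ring

lemma hasDerivAt_Dt (k : ℕ) (hx : 0 < x) : HasDerivAt (fun y => Dt ν k y) (Et ν k x) x := by
  have h1 : HasDerivAt (fun y : ℝ => y / 2) (1 / 2) x := (hasDerivAt_id x).div_const 2
  have h2 := (((h1.rpow_const (p := ν + 2 * (k:ℝ) - 1) (Or.inl (by positivity))).const_mul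
      (2⁻¹ * (ν + 2 * (k:ℝ)))).div_const (d ν k))
  refine h2.congr_deriv ?_
  simp only [Et]
  ring

noncomputable def Dfun (ν x : ℝ) : ℝ := ∑' k, Dt ν k x

lemma rpow_shift {y : ℝ} (hy : 0 < y) (c : ℝ) : y ^ c = y ^ (c - 1) * y := by
  nth_rewrite 1 [show c = c - 1 + 1 by ring]
  exact Real.rpow_add_one hy.ne' (c - 1)

lemma x_mul_Dt (hx : 0 < x) (k : ℕ) : x * Dt ν k x = (ν + 2 * (k:ℝ)) * T ν k x := by
  simp only [Dt, T_def]
  rw [rpow_shift (by linarith : (0:ℝ) < x / 2) (ν + 2 * (k:ℝ))]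
  ring

lemma x_sq_mul_Et (hx : 0 < x) (k : ℕ) :
    x ^ 2 * Et ν k x = (ν + 2 * (k:ℝ)) * (ν + 2 * (k:ℝ) - 1) * T ν k x := by
  simp only [Et, T_def]
  rw [rpow_shift (by linarith : (0:ℝ) < x / 2) (ν + 2 * (k:ℝ)),
      rpow_shift (by linarith : (0:ℝ) < x / 2) (ν + 2 * (k:ℝ) - 1)]
  ring

lemma x_sq_mul_T (hν : 0 ≤ ν) (hx : 0 < x) (k : ℕ) :
    x ^ 2 * T ν k x = 4 * ((k:ℝ) + 1) * (ν + k + 1) * T ν (k+1) x := by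
  have hne : (x / 2 : ℝ) ≠ 0 := by positivity
  have e1 : (x/2:ℝ) ^ (ν + 2*(((k+1):ℕ):ℝ)) = (x/2)^(ν+2*(k:ℝ)) * (x/2) * (x/2) := by
    rw [show ν + 2*(((k+1):ℕ):ℝ) = (ν + 2*(k:ℝ) + 1) + 1 by push_cast; ring,
       Real.rpow_add_one hne, Real.rpow_add_one hne]
  simp only [T_def]
  rw [d_succ hν k, e1]
  have hk1 : ((k:ℝ) + 1) ≠ 0 := by positivity
  have hνk : (ν + (k:ℝ) + 1) ≠ 0 := by positivity
  have hd : d ν k ≠ 0 := (d_pos hν k).ne'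
  field_simp
  ring

lemma Dt_bound (hν : 0 ≤ ν) {a b y : ℝ} (ha : 0 < a) (hay : a ≤ y) (hyb : y ≤ b) (k : ℕ) :
    ‖Dt ν k y‖ ≤ (2⁻¹ * (ν + 2 * (k:ℝ)) * max ((a/2)^(ν-1)) ((b/2)^(ν-1))) * ((b/2)^2)^k
      / d ν k := by
  have hy : 0 < y := lt_of_lt_of_le ha hay
  have hy2 : (0:ℝ) < y / 2 := by linarith
  have hsplit : (y/2:ℝ) ^ (ν + 2*(k:ℝ) - 1) = (y/2)^(ν-1) * ((y/2)^2)^k := by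
    rw [show ν + 2*(k:ℝ) - 1 = (ν - 1) + 2*(k:ℝ) by ring, rpow_split hy2]
  have hcoef : 0 ≤ 2⁻¹ * (ν + 2 * (k:ℝ)) := by positivity
  rw [Real.norm_eq_abs, Dt, abs_div, abs_of_pos (d_pos hν k), abs_mul,
    abs_of_nonneg hcoef, abs_of_nonneg (Real.rpow_nonneg hy2.le _), hsplit]
  have h1 : (y/2:ℝ)^(ν-1) ≤ max ((a/2)^(ν-1)) ((b/2)^(ν-1)) :=
    rpow_le_max (by linarith) (by linarith) (by linarith)
  have h2 : ((y/2:ℝ)^2)^k ≤ ((b/2:ℝ)^2)^k := pow_le_pow_left₀ (by positivity) (by nlinarith) k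
  have hM : (0:ℝ) ≤ max ((a/2)^(ν-1)) ((b/2)^(ν-1)) :=
    le_trans (Real.rpow_nonneg (by linarith : (0:ℝ) ≤ a/2) _) (le_max_left _ _)
  apply div_le_div₀ (by positivity) _ (d_pos hν k) le_rfl
  calc 2⁻¹*(ν + 2*(k:ℝ)) * ((y/2)^(ν-1) * ((y/2)^2)^k)
      ≤ 2⁻¹*(ν + 2*(k:ℝ)) * (max ((a/2)^(ν-1)) ((b/2)^(ν-1)) * ((b/2)^2)^k) := by
        apply mul_le_mul_of_nonneg_left _ hcoef
        exact mul_le_mul h1 h2 (by positivity) hM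
    _ = (2⁻¹*(ν + 2*(k:ℝ)) * max ((a/2)^(ν-1)) ((b/2)^(ν-1)))*((b/2)^2)^k := by ring

lemma Et_bound (hν : 0 ≤ ν) {a b y : ℝ} (ha : 0 < a) (hay : a ≤ y) (hyb : y ≤ b) (k : ℕ) :
    ‖Et ν k y‖ ≤ (4⁻¹ * ((ν + 2 * (k:ℝ)) * (ν + 2 * (k:ℝ) + 1)) *
      max ((a/2)^(ν-2)) ((b/2)^(ν-2))) * ((b/2)^2)^k / d ν k := by
  have hy : 0 < y := lt_of_lt_of_le ha hay
  have hy2 : (0:ℝ) < y / 2 := by linarith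
  have hsplit : (y/2:ℝ) ^ (ν + 2*(k:ℝ) - 1 - 1) = (y/2)^(ν-2) * ((y/2)^2)^k := by
    rw [show ν + 2*(k:ℝ) - 1 - 1 = (ν - 2) + 2*(k:ℝ) by ring, rpow_split hy2]
  have h1 : (y/2:ℝ)^(ν-2) ≤ max ((a/2)^(ν-2)) ((b/2)^(ν-2)) :=
    rpow_le_max (by linarith) (by linarith) (by linarith)
  have h2 : ((y/2:ℝ)^2)^k ≤ ((b/2:ℝ)^2)^k := pow_le_pow_left₀ (by positivity) (by nlinarith) k
  have hM : (0:ℝ) ≤ max ((a/2)^(ν-2)) ((b/2)^(ν-2)) :=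
    le_trans (Real.rpow_nonneg (by linarith : (0:ℝ) ≤ a/2) _) (le_max_left _ _)
  have habs : |ν + 2*(k:ℝ) - 1| ≤ ν + 2*(k:ℝ) + 1 := by
    rw [abs_le]
    constructor <;> [nlinarith [Nat.cast_nonneg (α := ℝ) k]; nlinarith]
  rw [Real.norm_eq_abs, Et, abs_div, abs_of_pos (d_pos hν k)]
  apply div_le_div₀ (by positivity) _ (d_pos hν k) le_rfl
  rw [hsplit]
  have hk0 : (0:ℝ) ≤ ν + 2*(k:ℝ) := by positivity
  calc |2⁻¹ * (ν + 2 * ↑k) * (2⁻¹ * (ν + 2 * ↑k - 1) * ((y/2)^(ν-2) * ((y/2)^2)^k))|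
      = 2⁻¹ * (ν + 2*(k:ℝ)) * (2⁻¹ * |ν + 2*(k:ℝ) - 1| * ((y/2)^(ν-2) * ((y/2)^2)^k)) := by
        rw [abs_mul, abs_mul, abs_mul, abs_mul]
        rw [abs_of_nonneg (by norm_num : (0:ℝ) ≤ (2:ℝ)⁻¹), abs_of_nonneg hk0,
          abs_of_nonneg (mul_nonneg (Real.rpow_nonneg hy2.le _) (by positivity))]
    _ ≤ 2⁻¹ * (ν + 2*(k:ℝ)) * (2⁻¹ * (ν + 2*(k:ℝ) + 1) *
          (max ((a/2)^(ν-2)) ((b/2)^(ν-2)) * ((b/2)^2)^k)) := by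
        apply mul_le_mul_of_nonneg_left _ (by positivity)
        apply mul_le_mul (by
          apply mul_le_mul_of_nonneg_left habs (by norm_num))
          (mul_le_mul h1 h2 (by positivity) hM) (by positivity) (by positivity)
    _ = (4⁻¹ * ((ν + 2 * (k:ℝ)) * (ν + 2 * (k:ℝ) + 1)) *
          max ((a/2)^(ν-2)) ((b/2)^(ν-2))) * ((b/2)^2)^k := by ring

lemma summable_Dt (hν : 0 ≤ ν) (hx : 0 < x) : Summable (fun k => Dt ν k x) := by
  have h := summable_wT (hν := hν) (hx := hx) (w := fun k => (ν + 2*(k:ℝ)) / x)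
      (C := (ν + 2) / x) (by
    intro k
    have hk : (0:ℝ) ≤ (k:ℝ) := Nat.cast_nonneg k
    rw [abs_div, abs_of_nonneg (by positivity : (0:ℝ) ≤ ν + 2*(k:ℝ)), abs_of_pos hx,
      div_le_iff₀ hx, div_mul_eq_mul_div, div_mul_cancel₀ _ hx.ne']
    nlinarith [mul_nonneg hν (sq_nonneg (k:ℝ)), sq_nonneg (k:ℝ), mul_nonneg hν hk])
  apply h.congr
  intro k
  have h2 := x_mul_Dt (ν := ν) hx k
  rw [div_mul_eq_mul_div, ← h2, mul_comm x, mul_div_assoc, div_self hx.ne', mul_one]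

lemma hasDerivAt_besselI (hν : 0 ≤ ν) (hx : 0 < x) :
    HasDerivAt (besselI ν) (Dfun ν x) x := by
  have ha : (0:ℝ) < x/2 := by linarith
  set M := max (((x/2)/2:ℝ)^(ν-1)) (((x+1)/2:ℝ)^(ν-1)) with hMdef
  have hM : 0 ≤ M := le_trans (Real.rpow_nonneg (by linarith) _) (le_max_left _ _)
  have hu : Summable (fun k : ℕ => (2⁻¹ * (ν + 2*(k:ℝ)) * M) * ((((x+1)/2:ℝ))^2)^k / d ν k) := by
    apply summable_master hν (by positivity) (C := 2⁻¹ * (ν+2) * M)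
    intro k
    have hk : (0:ℝ) ≤ (k:ℝ) := Nat.cast_nonneg k
    rw [abs_of_nonneg (by positivity)]
    nlinarith [mul_nonneg (mul_nonneg hν hM) hk, mul_nonneg hM hk,
      mul_nonneg (mul_nonneg hν hM) (sq_nonneg (k:ℝ)), mul_nonneg hM (sq_nonneg (k:ℝ))]
  have H := hasDerivAt_tsum_of_isPreconnected hu isOpen_Ioo
      (convex_Ioo (x/2) (x+1)).isPreconnected
      (g := fun k y => T ν k y) (g' := fun k y => Dt ν k y)
      (fun k y hy => hasDerivAt_T k (lt_trans ha hy.1))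
      (fun k y hy => Dt_bound hν ha hy.1.le hy.2.le k)
      (y₀ := x) ⟨half_lt_self hx, lt_add_one x⟩ (summable_T hν hx)
      (y := x) ⟨half_lt_self hx, lt_add_one x⟩
  exact H

lemma hasDerivAt_Dfun (hν : 0 ≤ ν) (hx : 0 < x) :
    HasDerivAt (Dfun ν) (∑' k, Et ν k x) x := by
  have ha : (0:ℝ) < x/2 := by linarith
  set M := max (((x/2)/2:ℝ)^(ν-2)) (((x+1)/2:ℝ)^(ν-2)) with hMdef
  have hM : 0 ≤ M := le_trans (Real.rpow_nonneg (by linarith) _) (le_max_left _ _)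
  have hu : Summable (fun k : ℕ =>
      (4⁻¹ * ((ν + 2*(k:ℝ)) * (ν + 2*(k:ℝ) + 1)) * M) * ((((x+1)/2:ℝ))^2)^k / d ν k) := by
    apply summable_master hν (by positivity) (C := 4⁻¹ * ((ν+2) * (ν+3)) * M)
    intro k
    have hk : (0:ℝ) ≤ (k:ℝ) := Nat.cast_nonneg k
    rw [abs_of_nonneg (by positivity)]
    have key : (ν + 2*(k:ℝ)) * (ν + 2*(k:ℝ) + 1) ≤ ((ν+2) * (ν+3)) * ((k:ℝ)+1)^2 := by
      nlinarith [mul_nonneg hν hk, sq_nonneg (k:ℝ), mul_nonneg (mul_nonneg hν hν) hk,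
        mul_nonneg (mul_nonneg hν hk) hk, mul_nonneg hν (sq_nonneg (k:ℝ))]
    calc 4⁻¹ * ((ν + 2*(k:ℝ)) * (ν + 2*(k:ℝ) + 1)) * M
        ≤ 4⁻¹ * (((ν+2) * (ν+3)) * ((k:ℝ)+1)^2) * M := by
          apply mul_le_mul_of_nonneg_right _ hM
          apply mul_le_mul_of_nonneg_left key (by norm_num)
      _ = 4⁻¹ * ((ν+2) * (ν+3)) * M * ((k:ℝ)+1)^2 := by ring
  have H := hasDerivAt_tsum_of_isPreconnected hu isOpen_Ioo
      (convex_Ioo (x/2) (x+1)).isPreconnected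
      (g := fun k y => Dt ν k y) (g' := fun k y => Et ν k y)
      (fun k y hy => hasDerivAt_Dt k (lt_trans ha hy.1))
      (fun k y hy => Et_bound hν ha hy.1.le hy.2.le k)
      (y₀ := x) ⟨half_lt_self hx, lt_add_one x⟩ (summable_Dt hν hx)
      (y := x) ⟨half_lt_self hx, lt_add_one x⟩
  exact H

lemma summable_S1 (hν : 0 ≤ ν) (hx : 0 < x) :
    Summable (fun k : ℕ => (ν + 2*(k:ℝ)) * T ν k x) := by
  apply summable_wT hν hx (C := ν + 2)
  intro k
  have hk : (0:ℝ) ≤ (k:ℝ) := Nat.cast_nonneg k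
  rw [abs_of_nonneg (by positivity)]
  nlinarith [mul_nonneg hν (sq_nonneg (k:ℝ)), mul_nonneg hν hk]

lemma summable_S2 (hν : 0 ≤ ν) (hx : 0 < x) :
    Summable (fun k : ℕ => (ν + 2*(k:ℝ)) * (ν + 2*(k:ℝ) - 1) * T ν k x) := by
  apply summable_wT hν hx (C := (ν+2) * (ν+3))
  intro k
  have hk : (0:ℝ) ≤ (k:ℝ) := Nat.cast_nonneg k
  have habs : |ν + 2*(k:ℝ) - 1| ≤ ν + 2*(k:ℝ) + 1 := by
    rw [abs_le]; constructor <;> nlinarith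
  rw [abs_mul]
  calc |ν + 2*(k:ℝ)| * |ν + 2*(k:ℝ) - 1| ≤ (ν + 2*(k:ℝ)) * (ν + 2*(k:ℝ) + 1) := by
        rw [abs_of_nonneg (by positivity)]
        exact mul_le_mul_of_nonneg_left habs (by positivity)
    _ ≤ (ν+2) * (ν+3) * ((k:ℝ)+1)^2 := by
        nlinarith [mul_nonneg hν hk, sq_nonneg (k:ℝ), mul_nonneg (mul_nonneg hν hν) hk,
          mul_nonneg (mul_nonneg hν hk) hk, mul_nonneg hν (sq_nonneg (k:ℝ))]

lemma summable_SG (hν : 0 ≤ ν) (hx : 0 < x) :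
    Summable (fun k : ℕ => 4*(k:ℝ)*(ν+(k:ℝ)) * T ν k x) := by
  apply summable_wT hν hx (C := 4 * (ν + 1))
  intro k
  have hk : (0:ℝ) ≤ (k:ℝ) := Nat.cast_nonneg k
  rw [abs_of_nonneg (by positivity)]
  nlinarith [mul_nonneg hν hk, sq_nonneg (k:ℝ), mul_nonneg hν (sq_nonneg (k:ℝ))]

lemma x_mul_Dfun (hν : 0 ≤ ν) (hx : 0 < x) :
    x * Dfun ν x = ∑' k : ℕ, (ν + 2*(k:ℝ)) * T ν k x := by
  rw [Dfun, ← tsum_mul_left]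
  exact tsum_congr fun k => x_mul_Dt hx k

lemma ode (hν : 0 ≤ ν) (hx : 0 < x) :
    x^2 * (∑' k : ℕ, Et ν k x) = (x^2 + ν^2) * besselI ν x - x * Dfun ν x := by
  have S0 := summable_T hν hx
  have S1 := summable_S1 hν hx
  have SG := summable_SG hν hx
  have L : x^2 * (∑' k : ℕ, Et ν k x) = ∑' k : ℕ, (ν + 2*(k:ℝ))*(ν + 2*(k:ℝ)-1) * T ν k x := by
    rw [← tsum_mul_left]
    exact tsum_congr fun k => x_sq_mul_Et hx k
  have hx2I : x^2 * besselI ν x = ∑' k : ℕ, 4*(k:ℝ)*(ν+(k:ℝ)) * T ν k x := by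
    rw [besselI_eq, ← tsum_mul_left]
    rw [tsum_congr (fun k => x_sq_mul_T hν hx k), Summable.tsum_eq_zero_add SG]
    norm_num
    exact (tsum_congr fun k => by push_cast; ring).symm
  have comb : ∑' k : ℕ, (ν + 2*(k:ℝ))*(ν + 2*(k:ℝ)-1) * T ν k x
      = (∑' k : ℕ, 4*(k:ℝ)*(ν+(k:ℝ)) * T ν k x) + ν^2 * besselI ν x
        - (∑' k : ℕ, (ν + 2*(k:ℝ)) * T ν k x) := by
    rw [besselI_eq, ← tsum_mul_left, ← Summable.tsum_add SG (S0.mul_left _),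
      ← Summable.tsum_sub (SG.add (S0.mul_left _)) S1]
    exact tsum_congr fun k => by ring
  rw [L, comb, ← hx2I, ← x_mul_Dfun hν hx]
  ring

/-- Bound for `besselI` on `(0,1)`. -/
noncomputable def B (ν : ℝ) : ℝ := ∑' k : ℕ, ((4:ℝ)⁻¹)^k / d ν k

lemma T_le (hν : 0 ≤ ν) {x : ℝ} (hx : 0 < x) (hx1 : x < 1) (k : ℕ) :
    T ν k x ≤ ((4:ℝ)⁻¹)^k / d ν k := by
  have hx2 : (0:ℝ) < x/2 := by linarith
  rw [T_def, rpow_split hx2]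
  apply div_le_div₀ (by positivity) _ (d_pos hν k) le_rfl
  calc (x/2)^ν * ((x/2)^2)^k ≤ 1 * ((4:ℝ)⁻¹)^k := by
        apply mul_le_mul (Real.rpow_le_one hx2.le (by linarith) hν)
          (pow_le_pow_left₀ (by positivity) (by nlinarith) k) (by positivity) (by norm_num)
    _ = ((4:ℝ)⁻¹)^k := one_mul _

lemma summable_B (hν : 0 ≤ ν) : Summable (fun k : ℕ => ((4:ℝ)⁻¹)^k / d ν k) := by
  have := summable_master (q := (4:ℝ)⁻¹) hν (by norm_num) (w := fun _ => (1:ℝ)) (C := 1) (by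
    intro k
    rw [abs_one]
    have hk : (0:ℝ) ≤ (k:ℝ) := Nat.cast_nonneg k
    nlinarith)
  simpa using this

lemma besselI_le_B (hν : 0 ≤ ν) {x : ℝ} (hx : 0 < x) (hx1 : x < 1) :
    |besselI ν x| ≤ B ν := by
  rw [abs_of_pos (besselI_pos hν hx), besselI_eq, B]
  exact Summable.tsum_le_tsum (T_le hν hx hx1) (summable_T hν hx) (summable_B hν)

lemma tendsto_x_Dfun (hν : 0 ≤ ν) :
    Tendsto (fun x => x * Dfun ν x) (𝓝[>] (0:ℝ)) (𝓝 0) := by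
  have hbound : Summable (fun k : ℕ => (ν + 2*(k:ℝ)) * ((4:ℝ)⁻¹)^k / d ν k) := by
    apply summable_master hν (by norm_num) (C := ν + 2)
    intro k
    have hk : (0:ℝ) ≤ (k:ℝ) := Nat.cast_nonneg k
    rw [abs_of_nonneg (by positivity)]
    nlinarith [mul_nonneg hν (sq_nonneg (k:ℝ)), mul_nonneg hν hk]
  have key : Tendsto (fun x => ∑' k : ℕ, (ν + 2*(k:ℝ)) * T ν k x) (𝓝[>] (0:ℝ)) (𝓝 0) := by
    have H := tendsto_tsum_of_dominated_convergence
        (f := fun (x : ℝ) (k : ℕ) => (ν + 2*(k:ℝ)) * T ν k x) (g := fun _ => (0:ℝ))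
        (𝓕 := 𝓝[>] (0:ℝ)) hbound ?_ ?_
    · simpa using H
    · intro k
      by_cases hc : ν + 2*(k:ℝ) = 0
      · rw [show (fun x => (ν + 2*(k:ℝ)) * T ν k x) = fun _ => (0:ℝ) by
          funext y; rw [hc, zero_mul]]
        exact tendsto_const_nhds
      · have hp : 0 < ν + 2*(k:ℝ) :=
          lt_of_le_of_ne (by positivity) (Ne.symm hc)
        have h1 : Tendsto (fun x : ℝ => x/2) (𝓝[>] (0:ℝ)) (𝓝 0) := by
          have := ((continuous_id.div_const (2:ℝ)).tendsto 0).mono_left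
            (nhdsWithin_le_nhds (s := Ioi (0:ℝ)))
          simpa using this
        have h2 : Tendsto (fun x : ℝ => (x/2) ^ (ν + 2*(k:ℝ))) (𝓝[>] (0:ℝ)) (𝓝 0) := by
          have hc2 := (Real.continuousAt_rpow_const 0 (ν + 2*(k:ℝ)) (Or.inr hp.le)).tendsto
          have := hc2.comp h1
          rw [Real.zero_rpow hc] at this
          exact this
        have h3 := (h2.div_const (d ν k)).const_mul (ν + 2*(k:ℝ))
        simp only [zero_div, mul_zero] at h3
        exact h3.congr fun y => by simp only [T_def]
    · filter_upwards [Ioo_mem_nhdsGT zero_lt_one]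
        with y hy k
      have h1 : 0 ≤ (ν + 2*(k:ℝ)) * T ν k y :=
        mul_nonneg (by positivity) (T_pos hν hy.1 k).le
      rw [Real.norm_eq_abs, abs_of_nonneg h1, mul_div_assoc]
      exact mul_le_mul_of_nonneg_left (T_le hν hy.1 hy.2 k) (by positivity)
  apply key.congr'
  filter_upwards [self_mem_nhdsWithin] with y hy
  exact (x_mul_Dfun hν hy).symm

end BesselMono

open BesselMono Real Filter Topology Set in
theorem besselI_log_deriv_strictMono_in_order (ν μ r : ℝ) (hν : 0 ≤ ν) (hνμ : ν < μ)
    (hr : 0 < r) :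
    r * deriv (besselI ν) r / besselI ν r < r * deriv (besselI μ) r / besselI μ r := by
  have hμ : 0 ≤ μ := le_trans hν hνμ.le
  set f : ℝ → ℝ := fun y => y * (besselI μ y * Dfun ν y - besselI ν y * Dfun μ y) with hf
  -- derivative of f
  have hderiv : ∀ y, 0 < y →
      HasDerivAt f ((ν^2 - μ^2) * (besselI ν y * besselI μ y) / y) y := by
    intro y hy
    have hIν := hasDerivAt_besselI hν hy
    have hIμ := hasDerivAt_besselI hμ hy
    have hDν := hasDerivAt_Dfun hν hy
    have hDμ := hasDerivAt_Dfun hμ hy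
    have H := (hasDerivAt_id y).mul ((hIμ.mul hDν).sub (hIν.mul hDμ))
    refine H.congr_deriv (Eq.symm ?_)
    simp only [id_eq, Pi.mul_apply, Pi.sub_apply]
    have oν := ode hν hy
    have oμ := ode hμ hy
    rw [div_eq_iff hy.ne']
    linear_combination besselI ν y * oμ - besselI μ y * oν
  -- f is strictly decreasing on (0, ∞)
  have hcont : ContinuousOn f (Ioi 0) :=
    fun y hy => ((hderiv y hy).continuousAt).continuousWithinAt
  have hanti : StrictAntiOn f (Ioi 0) := by
    apply strictAntiOn_of_deriv_neg (convex_Ioi 0) hcont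
    intro y hy
    rw [interior_Ioi] at hy
    rw [(hderiv y hy).deriv]
    apply div_neg_of_neg_of_pos _ hy
    apply mul_neg_of_neg_of_pos _ (mul_pos (besselI_pos hν hy) (besselI_pos hμ hy))
    nlinarith
  -- f tends to 0 at 0⁺
  have hlim : Tendsto f (𝓝[>] (0:ℝ)) (𝓝 0) := by
    apply squeeze_zero_norm' (a := fun x => |x * Dfun ν x| * B μ + |x * Dfun μ x| * B ν)
    · filter_upwards [Ioo_mem_nhdsGT zero_lt_one]
        with y hy
      have hfy : f y = (y * Dfun ν y) * besselI μ y - (y * Dfun μ y) * besselI ν y := by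
        rw [hf]; ring
      rw [Real.norm_eq_abs, hfy]
      calc |(y * Dfun ν y) * besselI μ y - (y * Dfun μ y) * besselI ν y|
          ≤ |(y * Dfun ν y) * besselI μ y| + |(y * Dfun μ y) * besselI ν y| := abs_sub _ _
        _ = |y * Dfun ν y| * |besselI μ y| + |y * Dfun μ y| * |besselI ν y| := by
            rw [abs_mul (y * Dfun ν y) (besselI μ y), abs_mul (y * Dfun μ y) (besselI ν y)]
        _ ≤ |y * Dfun ν y| * B μ + |y * Dfun μ y| * B ν := by
            apply add_le_add
            · exact mul_le_mul_of_nonneg_left (besselI_le_B hμ hy.1 hy.2) (abs_nonneg _)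
            · exact mul_le_mul_of_nonneg_left (besselI_le_B hν hy.1 hy.2) (abs_nonneg _)
    · have h1 := ((tendsto_x_Dfun hν).abs.mul_const (B μ)).add
        ((tendsto_x_Dfun hμ).abs.mul_const (B ν))
      simpa using h1
  -- conclude f < 0 on (0, ∞)
  have hle : ∀ t : ℝ, 0 < t → f t ≤ 0 := by
    intro t ht
    have hev : ∀ᶠ s in 𝓝[>] (0:ℝ), f t ≤ f s := by
      filter_upwards [Ioo_mem_nhdsGT ht] with s hs
      exact (hanti (mem_Ioi.2 hs.1) (mem_Ioi.2 ht) hs.2).le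
    exact ge_of_tendsto hlim hev
  have hneg : f r < 0 := by
    have h1 : f r < f (r/2) :=
      hanti (mem_Ioi.2 (by linarith)) (mem_Ioi.2 hr) (half_lt_self hr)
    have h2 : f (r/2) ≤ 0 := hle (r/2) (by linarith)
    linarith
  -- finish
  have hIν := besselI_pos hν hr
  have hIμ := besselI_pos hμ hr
  rw [(hasDerivAt_besselI hν hr).deriv, (hasDerivAt_besselI hμ hr).deriv,
    div_lt_div_iff₀ hIν hIμ]
  have hfr : f r = r * (besselI μ r * Dfun ν r - besselI ν r * Dfun μ r) := rfl
  nlinarith [hneg]
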